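/- Let n ≥ 2 and let n₁, n₂ be positive divisors of n. Suppose there exist integers c₁, c₂, c₃ with gcd(c₁, n₁) = 1, gcd(c₂, n₂) = 1, gcd(c₃, n) = 1 and (n/n₁)·c₁ + (n/n₂)·c₂ + c₃ ≡ 0 (mod n). Then n − n/n₁ − n/n₂ + 1 is even. -/

import Mathlib

theorem stmt_8 (n n₁ n₂ : ℤ) (hn : 2 ≤ n) (h₁ : 0 < n₁) (h₂ : 0 < n₂)
    (hd₁ : n₁ ∣ n) (hd₂ : n₂ ∣ n)
    (h : ∃ c₁ c₂ c₃ : ℤ, Int.gcd c₁ n₁ = 1 ∧ Int.gcd c₂ n₂ = 1 ∧ Int.gcd c₃ n = 1 ∧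
      (n / n₁) * c₁ + (n / n₂) * c₂ + c₃ ≡ 0 [ZMOD n]) :
    Even (n - n / n₁ - n / n₂ + 1) := by
  obtain ⟨c₁, c₂, c₃, g₁, g₂, g₃, h⟩ := h
  set a := n / n₁ with ha
  set b := n / n₂ with hb
  have hna : n₁ * a = n := Int.mul_ediv_cancel' hd₁
  have hnb : n₂ * b = n := Int.mul_ediv_cancel' hd₂
  have hdvd : n ∣ a * c₁ + b * c₂ + c₃ := (Int.modEq_zero_iff_dvd).mp h
  -- coprimality ⇒ not both even
  have cop : ∀ x y : ℤ, Int.gcd x y = 1 → (2:ℤ) ∣ x → (2:ℤ) ∣ y → False := by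
    intro x y hg hx hy
    obtain ⟨u, v, huv⟩ := (Int.isCoprime_iff_gcd_eq_one).mpr hg
    have : (2:ℤ) ∣ 1 := huv ▸ dvd_add (hx.mul_left u) (hy.mul_left v)
    omega
  rcases Int.even_or_odd n with hne | hno
  · -- n even
    have h2n : (2:ℤ) ∣ n := hne.two_dvd
    have hc3 : ¬ (2:ℤ) ∣ c₃ := fun hc => cop c₃ n g₃ hc h2n
    -- a * c₁ ≡ a  (mod 2)
    have key : ∀ m c : ℤ, m * (n / m) = n → Int.gcd c m = 1 →
        (2:ℤ) ∣ (n / m) * c - (n / m) := by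
      intro m c hm hg
      rcases Int.even_or_odd (n / m) with he | ho
      · obtain ⟨k, hk⟩ := he
        exact ⟨k * c - k, by rw [hk]; ring⟩
      · have h2m : (2:ℤ) ∣ m := by
          rcases (Int.prime_two.dvd_mul.mp (hm ▸ h2n)) with hh | hh
          · exact hh
          · exact absurd ((even_iff_two_dvd).mpr hh) (Int.not_even_iff_odd.mpr ho)
        have hc : ¬ (2:ℤ) ∣ c := fun hc => cop c m hg hc h2m
        have hodd : Odd ((n / m) * c) := ho.mul (Int.not_even_iff_odd.mp
          (fun he => hc he.two_dvd))
        obtain ⟨i, hi⟩ := hodd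
        obtain ⟨j, hj⟩ := ho
        exact ⟨i - j, by omega⟩
    obtain ⟨k, hk⟩ := key n₁ c₁ hna g₁
    obtain ⟨l, hl⟩ := key n₂ c₂ hnb g₂
    obtain ⟨s, hs⟩ := dvd_trans h2n hdvd
    obtain ⟨t, ht⟩ := h2n
    have hc3' : c₃ % 2 = 1 := by omega
    obtain ⟨m, hm⟩ : ∃ m, c₃ = 2 * m + 1 := ⟨c₃ / 2, by omega⟩
    have hab : a + b = 2 * (s - k - l - m) - 1 := by linarith
    exact ⟨t - (s - k - l - m) + 1, by omega⟩
  · -- n odd: all divisors odd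
    have hao : Odd a := by
      rcases Int.even_or_odd a with he | ho
      · exact absurd (hna ▸ he.mul_left n₁) (Int.not_even_iff_odd.mpr hno)
      · exact ho
    have hbo : Odd b := by
      rcases Int.even_or_odd b with he | ho
      · exact absurd (hnb ▸ he.mul_left n₂) (Int.not_even_iff_odd.mpr hno)
      · exact ho
    obtain ⟨i, hi⟩ := hao
    obtain ⟨j, hj⟩ := hbo
    obtain ⟨k, hk⟩ := hno
    exact ⟨k - i - j, by omega⟩
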